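/- Let α > −1 be real, N ≥ 1, let (v_n)_{n≥1} be a sequence of pairwise distinct positive reals, and let (u_n)_{n≥1} be real numbers with u_n = 0 for all but finitely many n. Then lim_{c → 0⁺} det_{1≤i,j≤N}[ Σ_{n=1}^∞ v_n^{i+2j+α−3} · J_{α+i−1}(c v_n) · u_n ] / ∏_{i=1}^N (c/2)^{α+i−1} = ( ∏_{i=1}^N 1/Γ(α+i) ) · det_{1≤i,j≤N}[ Σ_{n=1}^∞ v_n^{2i+2j+2α−4} · u_n ]. -/

import Mathlib

open Filter

/-- The Bessel function of the first kind, for `x > 0`,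
`J_β(x) = Σ_{k=0}^∞ (-1)^k (x/2)^{2k+β} / (k! Γ(k+β+1))`. -/
noncomputable def besselJ (β x : ℝ) : ℝ :=
  ∑' k : ℕ, (-1 : ℝ) ^ k * (x / 2) ^ (2 * (k : ℝ) + β) /
    ((Nat.factorial k : ℝ) * Real.Gamma ((k : ℝ) + β + 1))

noncomputable def gfun (β t : ℝ) : ℝ :=
  ∑' k : ℕ, (-1 : ℝ) ^ k * t ^ k / ((Nat.factorial k : ℝ) * Real.Gamma ((k : ℝ) + β + 1))

lemma gamma_pos (β : ℝ) (hβ : -1 < β) (k : ℕ) : 0 < Real.Gamma ((k : ℝ) + β + 1) := by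
  apply Real.Gamma_pos_of_pos
  have : (0:ℝ) ≤ (k:ℝ) := Nat.cast_nonneg k
  linarith

lemma summable_abound (β : ℝ) (hβ : -1 < β) :
    Summable (fun k : ℕ => 1 / ((Nat.factorial k : ℝ) * Real.Gamma ((k : ℝ) + β + 1))) := by
  apply summable_of_ratio_norm_eventually_le (r := 1/2) (by norm_num)
  filter_upwards [eventually_ge_atTop 1] with k hk
  have hg := gamma_pos β hβ k
  have hg' := gamma_pos β hβ (k+1)
  have hfac : (0:ℝ) < (Nat.factorial k : ℝ) := by positivity
  have hne : ((k:ℝ) + β + 1) ≠ 0 := by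
    have : (1:ℝ) ≤ (k:ℝ) := by exact_mod_cast hk
    intro h; linarith
  have hGadd : Real.Gamma (((k+1 : ℕ):ℝ) + β + 1) = ((k:ℝ)+β+1) * Real.Gamma ((k:ℝ)+β+1) := by
    have : (((k+1 : ℕ):ℝ) + β + 1) = ((k:ℝ) + β + 1) + 1 := by push_cast; ring
    rw [this, Real.Gamma_add_one hne]
  have hfac' : (Nat.factorial (k+1) : ℝ) = ((k:ℝ)+1) * (Nat.factorial k : ℝ) := by
    push_cast [Nat.factorial_succ]; ring
  rw [Real.norm_eq_abs, Real.norm_eq_abs, abs_of_pos (by positivity), abs_of_pos (by positivity),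
    hGadd, hfac']
  have hk1 : (1:ℝ) ≤ (k:ℝ) := by exact_mod_cast hk
  have h2 : (2:ℝ) ≤ ((k:ℝ)+1) * ((k:ℝ)+β+1) := by nlinarith
  have key : 2 * ((Nat.factorial k : ℝ) * Real.Gamma ((k:ℝ)+β+1)) ≤
      ((k:ℝ)+1) * (Nat.factorial k : ℝ) * (((k:ℝ)+β+1) * Real.Gamma ((k:ℝ)+β+1)) := by
    calc 2 * ((Nat.factorial k : ℝ) * Real.Gamma ((k:ℝ)+β+1))
        ≤ (((k:ℝ)+1) * ((k:ℝ)+β+1)) * ((Nat.factorial k : ℝ) * Real.Gamma ((k:ℝ)+β+1)) :=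
          mul_le_mul_of_nonneg_right h2 (by positivity)
      _ = ((k:ℝ)+1) * (Nat.factorial k : ℝ) * (((k:ℝ)+β+1) * Real.Gamma ((k:ℝ)+β+1)) := by ring
  calc 1 / (((k:ℝ)+1) * (Nat.factorial k : ℝ) * (((k:ℝ)+β+1) * Real.Gamma ((k:ℝ)+β+1)))
      ≤ 1 / (2 * ((Nat.factorial k : ℝ) * Real.Gamma ((k:ℝ)+β+1))) := by
        apply one_div_le_one_div_of_le (by positivity) key
    _ = 1/2 * (1 / ((Nat.factorial k : ℝ) * Real.Gamma ((k:ℝ)+β+1))) := by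
        field_simp

lemma gfun_zero (β : ℝ) : gfun β 0 = 1 / Real.Gamma (β + 1) := by
  unfold gfun
  rw [tsum_eq_single 0]
  · simp
  · intro k hk
    simp [zero_pow hk]

lemma gfun_continuousOn (β : ℝ) (hβ : -1 < β) :
    ContinuousOn (gfun β) (Set.Icc (-1) 1) := by
  apply continuousOn_tsum (u := fun k : ℕ => 1 / ((Nat.factorial k : ℝ) * Real.Gamma ((k : ℝ) + β + 1)))
  · intro k; exact (Continuous.continuousOn (by continuity))
  · exact summable_abound β hβ
  · intro k t ht
    have hg := gamma_pos β hβ k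
    have hfac : (0:ℝ) < (Nat.factorial k : ℝ) := by positivity
    have h1 : |t| ≤ 1 := abs_le.2 ⟨ht.1, ht.2⟩
    calc ‖(-1:ℝ)^k * t^k / ((Nat.factorial k : ℝ) * Real.Gamma ((k:ℝ)+β+1))‖
        = |t|^k / ((Nat.factorial k : ℝ) * Real.Gamma ((k:ℝ)+β+1)) := by
          rw [Real.norm_eq_abs, abs_div, abs_mul, abs_pow, abs_pow, abs_neg, abs_one, one_pow,
            one_mul, abs_of_pos (mul_pos hfac hg)]
      _ ≤ 1 / ((Nat.factorial k : ℝ) * Real.Gamma ((k:ℝ)+β+1)) := by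
          gcongr
          exact pow_le_one₀ (abs_nonneg t) h1

lemma besselJ_eq (β x : ℝ) (hx : 0 < x) :
    besselJ β x = (x / 2) ^ β * gfun β ((x / 2) ^ 2) := by
  unfold besselJ gfun
  rw [← tsum_mul_left]
  apply tsum_congr; intro k
  have hx2 : (0:ℝ) < x / 2 := by linarith
  have : (x/2) ^ (2 * (k:ℝ) + β) = (x/2) ^ β * ((x/2)^2) ^ k := by
    rw [Real.rpow_add hx2, mul_comm]
    congr 1
    rw [show (2 * (k:ℝ)) = ((2 * k : ℕ) : ℝ) by push_cast; ring, Real.rpow_natCast, pow_mul]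
  rw [this]; ring


lemma gfun_tendsto (β : ℝ) (hβ : -1 < β) (w : ℝ) :
    Tendsto (fun c : ℝ => gfun β ((c * w / 2) ^ 2)) (nhdsWithin 0 (Set.Ioi 0))
      (nhds (1 / Real.Gamma (β + 1))) := by
  have h0 : ContinuousWithinAt (gfun β) (Set.Icc (-1) 1) 0 :=
    (gfun_continuousOn β hβ).continuousWithinAt (by norm_num)
  have hin : Tendsto (fun c : ℝ => (c * w / 2) ^ 2) (nhdsWithin 0 (Set.Ioi 0)) (nhds 0) := by
    have : Tendsto (fun c : ℝ => (c * w / 2) ^ 2) (nhds 0) (nhds 0) := by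
      have h : Continuous (fun c : ℝ => (c * w / 2) ^ 2) :=
        ((continuous_id.mul continuous_const).div_const 2).pow 2
      simpa using h.tendsto 0
    exact this.mono_left nhdsWithin_le_nhds
  have hin' : Tendsto (fun c : ℝ => (c * w / 2) ^ 2) (nhdsWithin 0 (Set.Ioi 0))
      (nhdsWithin 0 (Set.Icc (-1) 1)) := by
    apply tendsto_nhdsWithin_of_tendsto_nhds_of_eventually_within _ hin
    exact hin.eventually (Icc_mem_nhds (by norm_num) (by norm_num))
  have := h0.tendsto.comp hin'
  rwa [gfun_zero] at this

theorem stmt_15 (α : ℝ) (hα : -1 < α) (N : ℕ) (hN : 1 ≤ N)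
    (v : ℕ → ℝ) (hvinj : Function.Injective v) (hvpos : ∀ n, 0 < v n)
    (u : ℕ → ℝ) (hu : (Function.support u).Finite) :
    Filter.Tendsto
      (fun c : ℝ =>
        (Matrix.of fun i j : Fin N =>
          ∑' n : ℕ, v n ^ (((i : ℕ) : ℝ) + 2 * ((j : ℕ) : ℝ) + α) *
            besselJ (α + (i : ℕ)) (c * v n) * u n).det /
          ∏ i : Fin N, (c / 2) ^ (α + ((i : ℕ) : ℝ)))
      (nhdsWithin 0 (Set.Ioi (0 : ℝ)))
      (nhds ((∏ i : Fin N, 1 / Real.Gamma (α + (i : ℕ) + 1)) *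
        (Matrix.of fun i j : Fin N =>
          ∑' n : ℕ, v n ^ (2 * ((i : ℕ) : ℝ) + 2 * ((j : ℕ) : ℝ) + 2 * α) * u n).det)) := by
  classical
  set S := hu.toFinset with hS
  have hSmem : ∀ n, n ∉ S → u n = 0 := by
    intro n hn
    by_contra h
    exact hn (hu.mem_toFinset.2 h)
  set B : ℝ → Matrix (Fin N) (Fin N) ℝ := fun c => Matrix.of fun i j : Fin N =>
    ∑ n ∈ S, v n ^ (2 * ((i : ℕ) : ℝ) + 2 * ((j : ℕ) : ℝ) + 2 * α) *
      gfun (α + (i : ℕ)) ((c * v n / 2) ^ 2) * u n with hB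
  set C : Matrix (Fin N) (Fin N) ℝ := Matrix.of fun i j : Fin N =>
    (1 / Real.Gamma (α + (i : ℕ) + 1)) *
      ∑' n : ℕ, v n ^ (2 * ((i : ℕ) : ℝ) + 2 * ((j : ℕ) : ℝ) + 2 * α) * u n with hC
  have hβi : ∀ i : Fin N, (-1 : ℝ) < α + (i : ℕ) := by
    intro i
    have : (0:ℝ) ≤ (i : ℕ) := Nat.cast_nonneg _
    linarith
  -- Step 2: tendsto of det B
  have hBC : Tendsto B (nhdsWithin 0 (Set.Ioi 0)) (nhds C) := by
    refine tendsto_pi_nhds.2 ?_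
    intro i
    rw [tendsto_pi_nhds]
    intro j
    have hCij : C i j = ∑ n ∈ S, v n ^ (2 * ((i : ℕ) : ℝ) + 2 * ((j : ℕ) : ℝ) + 2 * α) *
        (1 / Real.Gamma (α + (i : ℕ) + 1)) * u n := by
      show (1 / Real.Gamma (α + (i : ℕ) + 1)) * _ = _
      rw [tsum_eq_sum (s := S) (by intro n hn; rw [hSmem n hn]; ring), Finset.mul_sum]
      exact Finset.sum_congr rfl fun n _ => by ring
    rw [hCij]
    apply tendsto_finset_sum
    intro n _
    have hg := gfun_tendsto (α + (i : ℕ)) (hβi i) (v n)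
    have := (hg.const_mul (v n ^ (2 * ((i : ℕ) : ℝ) + 2 * ((j : ℕ) : ℝ) + 2 * α))).mul_const (u n)
    simpa [mul_comm, mul_assoc, mul_left_comm] using this
  have hdet : Tendsto (fun c => (B c).det) (nhdsWithin 0 (Set.Ioi 0)) (nhds C.det) :=
    ((Continuous.matrix_det continuous_id).continuousAt (x := C)).tendsto.comp hBC
  -- value of C.det
  have hCdet : C.det = (∏ i : Fin N, 1 / Real.Gamma (α + (i : ℕ) + 1)) *
      (Matrix.of fun i j : Fin N =>
        ∑' n : ℕ, v n ^ (2 * ((i : ℕ) : ℝ) + 2 * ((j : ℕ) : ℝ) + 2 * α) * u n).det := by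
    rw [hC]
    exact Matrix.det_mul_column _ _
  rw [← hCdet]
  -- Step 1: eventual equality
  apply hdet.congr'
  filter_upwards [self_mem_nhdsWithin] with c (hc : 0 < c)
  have hentry : ∀ i j : Fin N,
      (∑' n : ℕ, v n ^ (((i : ℕ) : ℝ) + 2 * ((j : ℕ) : ℝ) + α) *
        besselJ (α + (i : ℕ)) (c * v n) * u n)
      = (c / 2) ^ (α + ((i : ℕ) : ℝ)) * B c i j := by
    intro i j
    have key : ∀ n : ℕ, v n ^ (((i : ℕ) : ℝ) + 2 * ((j : ℕ) : ℝ) + α) *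
        besselJ (α + (i : ℕ)) (c * v n) * u n
        = (c / 2) ^ (α + ((i : ℕ) : ℝ)) *
          (v n ^ (2 * ((i : ℕ) : ℝ) + 2 * ((j : ℕ) : ℝ) + 2 * α) *
            gfun (α + (i : ℕ)) ((c * v n / 2) ^ 2) * u n) := by
      intro n
      have hv := hvpos n
      have hcv : 0 < c * v n := mul_pos hc hv
      rw [besselJ_eq _ _ hcv]
      have h1 : (c * v n / 2 : ℝ) = (c / 2) * v n := by ring
      have h2 : (c * v n / 2) ^ (α + ((i : ℕ) : ℝ)) =
          (c / 2) ^ (α + ((i : ℕ) : ℝ)) * v n ^ (α + ((i : ℕ) : ℝ)) := by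
        rw [h1, Real.mul_rpow (by linarith) hv.le]
      rw [h2]
      have h3 : v n ^ (((i : ℕ) : ℝ) + 2 * ((j : ℕ) : ℝ) + α) * v n ^ (α + ((i : ℕ) : ℝ)) =
          v n ^ (2 * ((i : ℕ) : ℝ) + 2 * ((j : ℕ) : ℝ) + 2 * α) := by
        rw [← Real.rpow_add hv]
        congr 1
        ring
      calc v n ^ (((i : ℕ) : ℝ) + 2 * ((j : ℕ) : ℝ) + α) *
            ((c / 2) ^ (α + ((i : ℕ) : ℝ)) * v n ^ (α + ((i : ℕ) : ℝ)) *
              gfun (α + (i : ℕ)) ((c * v n / 2) ^ 2)) * u n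
          = (c / 2) ^ (α + ((i : ℕ) : ℝ)) *
            ((v n ^ (((i : ℕ) : ℝ) + 2 * ((j : ℕ) : ℝ) + α) * v n ^ (α + ((i : ℕ) : ℝ))) *
              gfun (α + (i : ℕ)) ((c * v n / 2) ^ 2) * u n) := by ring
        _ = _ := by rw [h3]
    rw [tsum_congr key, tsum_mul_left]
    congr 1
    show _ = ∑ n ∈ S, _
    apply tsum_eq_sum
    intro n hn
    rw [hSmem n hn]
    ring
  have hmatrix : (Matrix.of fun i j : Fin N =>
      ∑' n : ℕ, v n ^ (((i : ℕ) : ℝ) + 2 * ((j : ℕ) : ℝ) + α) *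
        besselJ (α + (i : ℕ)) (c * v n) * u n)
      = Matrix.of fun i j : Fin N => (c / 2) ^ (α + ((i : ℕ) : ℝ)) * B c i j := by
    ext i j
    exact hentry i j
  rw [hmatrix, Matrix.det_mul_column]
  have hprod : (∏ i : Fin N, (c / 2) ^ (α + ((i : ℕ) : ℝ))) ≠ 0 := by
    apply Finset.prod_ne_zero_iff.2
    intro i _
    exact (Real.rpow_pos_of_pos (by linarith) _).ne'
  rw [mul_comm, mul_div_assoc, div_self hprod, mul_one]
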